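/- For 0 < δ < 1, ν = (1-√δ)/(1+√δ), and θ ∈ (-1/2, 1/2), one has θ - h_ν(θ) = (2/π) arctan( √δ cos(πθ) / (1 - √δ sin(πθ)) ) and θ - h_{1/ν}(θ) = -(2/π) arctan( √δ cos(πθ) / (1 + √δ sin(πθ)) ). -/

import Mathlib

open Real

noncomputable def h (ν θ : ℝ) : ℝ :=
  (2 / π) * arctan (((ν + 1) * tan (π * θ / 2) + (ν - 1)) /
    ((ν - 1) * tan (π * θ / 2) + (ν + 1)))

lemma key (s θ : ℝ) (hs : |s| < 1) (hθ : θ ∈ Set.Ioo (-(1:ℝ)/2) (1/2)) :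
    θ - h ((1 - s) / (1 + s)) θ =
      (2 / π) * arctan (s * cos (π * θ) / (1 - s * sin (π * θ))) := by
  obtain ⟨hθ1, hθ2⟩ := hθ
  have hpi := Real.pi_pos
  obtain ⟨hs1, hs2⟩ := abs_lt.mp hs
  have hssq : s^2 < 1 := by nlinarith
  set a := π * θ / 2 with ha_def
  have ha1 : -(π/4) < a := by rw [ha_def]; nlinarith
  have ha2 : a < π/4 := by rw [ha_def]; nlinarith
  set t := tan a with ht_def
  have hmono := Real.strictMonoOn_tan
  have hmem : a ∈ Set.Ioo (-(π/2)) (π/2) := ⟨by linarith, by linarith⟩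
  have hq4 : (π/4 : ℝ) ∈ Set.Ioo (-(π/2)) (π/2) := ⟨by linarith, by linarith⟩
  have hq4' : (-(π/4) : ℝ) ∈ Set.Ioo (-(π/2)) (π/2) := ⟨by linarith, by linarith⟩
  have ht1 : t < 1 := by
    have := hmono hmem hq4 ha2
    rwa [Real.tan_pi_div_four] at this
  have ht2 : -1 < t := by
    have := hmono hq4' hmem ha1
    rwa [Real.tan_neg, Real.tan_pi_div_four] at this
  clear_value t
  have hst : s * t < 1 := by nlinarith
  have hst' : (0:ℝ) < 1 - s * t := by linarith
  have hD : 0 < 1 + t^2 - 2*s*t := by nlinarith [sq_nonneg (s - t)]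
  have hca : 0 < cos a := Real.cos_pos_of_mem_Ioo hmem
  have hsa : sin a = t * cos a := by rw [ht_def]; exact (Real.tan_mul_cos hca.ne').symm
  have hsasq : sin a ^ 2 = t^2 * cos a ^ 2 := by rw [hsa]; ring
  have hone : cos a ^ 2 * (1 + t^2) = 1 := by
    have := Real.sin_sq_add_cos_sq a
    nlinarith [hsasq]
  have h2a : π * θ = a + a := by rw [ha_def]; ring
  have hc2 : cos (π * θ) = (1 - t^2) * cos a ^ 2 := by
    rw [h2a, Real.cos_add, hsa]; ring
  have hs2a : sin (π * θ) = 2 * t * cos a ^ 2 := by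
    rw [h2a, Real.sin_add, hsa]; ring
  have h1s : (0:ℝ) < 1 + s := by linarith
  have hnu : (((1 - s) / (1 + s) + 1) * t + ((1 - s) / (1 + s) - 1)) /
      (((1 - s) / (1 + s) - 1) * t + ((1 - s) / (1 + s) + 1)) = (t - s) / (1 - s * t) := by
    have hden2 : ((1 - s) / (1 + s) - 1) * t + ((1 - s) / (1 + s) + 1)
        = (2 - 2*(s*t)) / (1+s) := by
      field_simp; ring
    rw [div_eq_div_iff (by rw [hden2]; exact (div_pos (by linarith) h1s).ne') hst'.ne']
    field_simp
    ring
  set φ := arctan ((t - s) / (1 - s * t)) with hφ_def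
  have hcφ : 0 < cos φ := Real.cos_arctan_pos _
  have htφ : tan φ = (t - s) / (1 - s * t) := Real.tan_arctan _
  have hsφ : sin φ = (t - s) / (1 - s * t) * cos φ := by
    rw [← htφ]; exact (Real.tan_mul_cos hcφ.ne').symm
  have hφ1 : -(π/2) < φ := Real.neg_pi_div_two_lt_arctan _
  have hφ2 : φ < π/2 := Real.arctan_lt_pi_div_two _
  clear_value φ
  have hcos : cos (a - φ) = cos a * cos φ * ((1 + t^2 - 2*s*t) / (1 - s*t)) := by
    rw [Real.cos_sub, hsa, hsφ]; linear_combination (-(cos a * cos φ)) * mul_inv_cancel₀ hst'.ne'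
  have hcospos : 0 < cos (a - φ) := by
    rw [hcos]; exact mul_pos (mul_pos hca hcφ) (div_pos hD hst')
  have hsin : sin (a - φ) = cos a * cos φ * ((s * (1 - t^2)) / (1 - s*t)) := by
    rw [Real.sin_sub, hsa, hsφ]; linear_combination (-(t * cos a * cos φ)) * mul_inv_cancel₀ hst'.ne'
  set X := s * cos (π * θ) / (1 - s * sin (π * θ)) with hX_def
  clear_value X
  have hden : 1 - s * sin (π * θ) = cos a ^2 * (1 + t^2 - 2*s*t) := by
    rw [hs2a]; linear_combination -hone
  have hdenpos : 0 < cos a ^2 * (1 + t^2 - 2*s*t) := mul_pos (pow_pos hca 2) hD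
  have hX : X = s * (1 - t^2) / (1 + t^2 - 2*s*t) := by
    rw [hX_def, hden, hc2, div_eq_div_iff hdenpos.ne' hD.ne']
    ring
  have htan : tan (a - φ) = X := by
    rw [Real.tan_eq_sin_div_cos, hsin, hcos, hX,
      div_eq_div_iff (mul_pos (mul_pos hca hcφ) (div_pos hD hst')).ne' hD.ne']
    field_simp
  have hrange1 : -(π/2) < a - φ := by
    by_contra hcon
    push_neg at hcon
    have : cos (a - φ) ≤ 0 := by
      have := Real.cos_nonpos_of_pi_div_two_le_of_le (x := -(a - φ)) (by linarith)
        (by linarith)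
      rwa [Real.cos_neg] at this
    linarith
  have hrange2 : a - φ < π/2 := by
    by_contra hcon
    push_neg at hcon
    have : cos (a - φ) ≤ 0 :=
      Real.cos_nonpos_of_pi_div_two_le_of_le (by linarith) (by linarith)
    linarith
  have harc : arctan X = a - φ := by
    rw [← htan, Real.arctan_tan hrange1 hrange2]
  have hθa : θ = (2/π) * a := by rw [ha_def]; field_simp
  rw [h, ← ha_def, ← ht_def, hnu, ← hφ_def, harc, hθa]
  ring

theorem theta_sub_h_eq (δ : ℝ) (hδ : 0 < δ) (hδ1 : δ < 1)
    (θ : ℝ) (hθ : θ ∈ Set.Ioo (-(1:ℝ)/2) (1/2)) :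
    θ - h ((1 - Real.sqrt δ) / (1 + Real.sqrt δ)) θ =
      (2 / π) * arctan (Real.sqrt δ * cos (π * θ) / (1 - Real.sqrt δ * sin (π * θ))) ∧
    θ - h (1 / ((1 - Real.sqrt δ) / (1 + Real.sqrt δ))) θ =
      -((2 / π) * arctan (Real.sqrt δ * cos (π * θ) / (1 + Real.sqrt δ * sin (π * θ)))) := by
  set s := Real.sqrt δ with hs_def
  have hs0 : 0 ≤ s := Real.sqrt_nonneg δ
  have hs1 : s < 1 := by
    rw [hs_def]
    exact (Real.sqrt_lt' one_pos).mpr (by linarith)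
  have habs : |s| < 1 := by rw [abs_of_nonneg hs0]; exact hs1
  have habs' : |(-s)| < 1 := by rwa [abs_neg]
  constructor
  · exact key s θ habs hθ
  · have h1 : 1 / ((1 - s) / (1 + s)) = (1 - (-s)) / (1 + (-s)) := by
      rw [one_div_div]; ring_nf
    have h2 := key (-s) θ habs' hθ
    rw [h1, h2]
    rw [show -s * cos (π * θ) / (1 - -s * sin (π * θ))
        = -(s * cos (π * θ) / (1 + s * sin (π * θ))) by ring_nf, Real.arctan_neg]
    ring
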